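/- Let k ≥ 10^8 and let edges of K_k be added one at a time. Call an edge 'rare' if it is among the first ⌈4(log k)^2⌉ edges added at one of its endpoints, and 'connective' if, at the moment just before it is added, it joins one of its endpoints z to a connected component of at least ⌈4(log k)^2⌉ vertices not containing z. If {v1, v2, v3} is a triple of distinct vertices none of whose three connecting edges is rare or connective, and {v_a, v_b} is the first-added among the three edges of the triple with v_c the remaining vertex, then at the moment just before the edge {v_b, v_c} is added, both v_b and v_c lie in the connected component of v_a, and at the moment just before {v_a, v_c} is added, both v_a and v_c lie in the connected component of v_b. -/

import Mathlib

/-- The graph consisting of the edges added up to time `t` in the edge ordering `σ`. -/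
def edgeOrderGraph (k : ℕ) (σ : Sym2 (Fin k) → ℕ) (t : ℕ) : SimpleGraph (Fin k) :=
  SimpleGraph.fromEdgeSet {e : Sym2 (Fin k) | σ e ≤ t}

/-- An edge is 'rare' if for some endpoint `z` it is among the first `⌈4 (log k)^2⌉`
edges incident to `z` in the order of addition. -/
def IsRareEdge (k : ℕ) (σ : Sym2 (Fin k) → ℕ) (e : Sym2 (Fin k)) : Prop :=
  ∃ z ∈ e, {f : Sym2 (Fin k) | ¬ f.IsDiag ∧ z ∈ f ∧ σ f ≤ σ e}.ncard
    ≤ ⌈4 * (Real.log k) ^ 2⌉₊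

/-- An edge `e = {z, w}` is 'connective' if just before it is added, it joins an endpoint
`z` to a connected component of at least `⌈4 (log k)^2⌉` vertices not containing `z`. -/
def IsConnectiveEdge (k : ℕ) (σ : Sym2 (Fin k) → ℕ) (e : Sym2 (Fin k)) : Prop :=
  ∃ z w : Fin k, e = s(z, w) ∧
    ⌈4 * (Real.log k) ^ 2⌉₊ ≤
      {x : Fin k | (edgeOrderGraph k σ (σ e - 1)).Reachable x w}.ncard ∧
    ¬ (edgeOrderGraph k σ (σ e - 1)).Reachable z w

/-- Let `k ≥ 10^8`. If `{v1, v2, v3}` is a triple of distinct vertices none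
of whose three connecting edges is rare or connective, and `{v1, v2}` is the first-added
of the three edges (so `v3` is the remaining vertex), then just before `{v2, v3}` is added
both `v2` and `v3` lie in the component of `v1`, and just before `{v1, v3}` is added both
`v1` and `v3` lie in the component of `v2`. -/
lemma key (k : ℕ) (σ : Sym2 (Fin k) → ℕ)
    (hσ : Set.BijOn σ {e : Sym2 (Fin k) | ¬ e.IsDiag} (Set.Icc 1 (k * (k - 1) / 2)))
    (z w : Fin k) (hzw : z ≠ w) (hr : ¬ IsRareEdge k σ s(z, w))
    (hc : ¬ IsConnectiveEdge k σ s(z, w)) :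
    (edgeOrderGraph k σ (σ s(z, w) - 1)).Reachable z w := by
  by_contra h
  apply hc
  refine ⟨z, w, rfl, ?_, h⟩
  set m := ⌈4 * (Real.log k) ^ 2⌉₊ with hm
  set S := {f : Sym2 (Fin k) | ¬ f.IsDiag ∧ w ∈ f ∧ σ f ≤ σ s(z, w)} with hS
  have hwS : m < S.ncard := by
    by_contra hle
    exact hr ⟨w, Sym2.mem_mk_right z w, not_lt.mp hle⟩
  have heS : s(z, w) ∈ S := ⟨by simp [Sym2.mk_isDiag_iff, hzw], Sym2.mem_mk_right z w, le_refl _⟩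
  set T := S \ {s(z, w)} with hT
  have hTcard : m ≤ T.ncard := by
    have : T.ncard = S.ncard - 1 := Set.ncard_diff_singleton_of_mem heS
    omega
  classical
  set g : Sym2 (Fin k) → Fin k := fun f => if h : w ∈ f then Sym2.Mem.other' h else w with hg
  have hinj : Set.InjOn g T := by
    intro f1 h1 f2 h2 heq
    have hw1 : w ∈ f1 := h1.1.2.1
    have hw2 : w ∈ f2 := h2.1.2.1
    simp only [hg, dif_pos hw1, dif_pos hw2] at heq
    rw [← Sym2.other_spec' hw1, ← Sym2.other_spec' hw2, heq]
  have hsub : g '' T ⊆ {x : Fin k | (edgeOrderGraph k σ (σ s(z, w) - 1)).Reachable x w} := by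
    rintro x ⟨f, hf, rfl⟩
    have hwF : w ∈ f := hf.1.2.1
    have hfe : f ≠ s(z, w) := hf.2
    have hσlt : σ f ≤ σ s(z, w) - 1 := by
      have hne : σ f ≠ σ s(z, w) := fun hEq => hfe (hσ.injOn hf.1.1 heS.1 hEq)
      have := hf.1.2.2
      omega
    have hne : Sym2.Mem.other' hwF ≠ w := by
      intro hEq
      apply hf.1.1
      rw [← Sym2.other_spec' hwF, hEq]
      simp [Sym2.mk_isDiag_iff]
    have hadj : (edgeOrderGraph k σ (σ s(z, w) - 1)).Adj w (Sym2.Mem.other' hwF) := by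
      rw [edgeOrderGraph, SimpleGraph.fromEdgeSet_adj]
      refine ⟨?_, hne.symm⟩
      show σ s(w, Sym2.Mem.other' hwF) ≤ σ s(z, w) - 1
      rw [Sym2.other_spec' hwF]
      exact hσlt
    simp only [hg, dif_pos hwF]
    exact hadj.symm.reachable
  calc m ≤ T.ncard := hTcard
    _ = (g '' T).ncard := (Set.ncard_image_of_injOn hinj).symm
    _ ≤ _ := Set.ncard_le_ncard hsub (Set.toFinite _)


theorem stmt_6 (k : ℕ) (hk : 10 ^ 8 ≤ k) (σ : Sym2 (Fin k) → ℕ)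
    (hσ : Set.BijOn σ {e : Sym2 (Fin k) | ¬ e.IsDiag} (Set.Icc 1 (k * (k - 1) / 2)))
    (v1 v2 v3 : Fin k) (h12 : v1 ≠ v2) (h13 : v1 ≠ v3) (h23 : v2 ≠ v3)
    (hgood : ∀ e ∈ ({s(v1, v2), s(v1, v3), s(v2, v3)} : Set (Sym2 (Fin k))),
      ¬ IsRareEdge k σ e ∧ ¬ IsConnectiveEdge k σ e)
    (hfirst1 : σ s(v1, v2) < σ s(v1, v3)) (hfirst2 : σ s(v1, v2) < σ s(v2, v3)) :
    ((edgeOrderGraph k σ (σ s(v2, v3) - 1)).Reachable v1 v2 ∧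
      (edgeOrderGraph k σ (σ s(v2, v3) - 1)).Reachable v1 v3) ∧
    ((edgeOrderGraph k σ (σ s(v1, v3) - 1)).Reachable v2 v1 ∧
      (edgeOrderGraph k σ (σ s(v1, v3) - 1)).Reachable v2 v3) := by
  have hpos : 1 ≤ σ s(v2, v3) ∧ 1 ≤ σ s(v1, v3) := by
    constructor <;>
    · refine (hσ.mapsTo ?_).1
      simp [Sym2.mk_isDiag_iff, h23, h13]
  have hadj1 : (edgeOrderGraph k σ (σ s(v2, v3) - 1)).Adj v1 v2 := by
    rw [edgeOrderGraph, SimpleGraph.fromEdgeSet_adj]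
    exact ⟨by simp only [Set.mem_setOf_eq]; omega, h12⟩
  have hadj2 : (edgeOrderGraph k σ (σ s(v1, v3) - 1)).Adj v1 v2 := by
    rw [edgeOrderGraph, SimpleGraph.fromEdgeSet_adj]
    exact ⟨by simp only [Set.mem_setOf_eq]; omega, h12⟩
  have h1 := hgood s(v2, v3) (by simp)
  have h2 := hgood s(v1, v3) (by simp)
  have key23 : (edgeOrderGraph k σ (σ s(v2, v3) - 1)).Reachable v2 v3 :=
    key k σ hσ v2 v3 h23 h1.1 h1.2
  have key13 : (edgeOrderGraph k σ (σ s(v1, v3) - 1)).Reachable v1 v3 :=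
    key k σ hσ v1 v3 h13 h2.1 h2.2
  exact ⟨⟨hadj1.reachable, hadj1.reachable.trans key23⟩,
    ⟨hadj2.symm.reachable, hadj2.symm.reachable.trans key13⟩⟩
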